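/- Exponent separation theorem: for distinct indices i, j ≥ 1 with i ≠ j (hence ij > 1), the equation p_i(α) = p_j(α) holds if and only if α = 1/2 or α = -1/(ij - 1); consequently, for α ∈ [0,1] with α ≠ 1/2, the exponents p_i(α) and p_j(α) are distinct. -/

import Mathlib

noncomputable def patpExp (i : ℝ) (α : ℝ) : ℝ :=
  1 / i + (4 - i - 3 / i) * α + (2 * i - 4 + 2 / i) * α ^ 2

theorem exponent_separation (i j : ℝ) (hi : 1 ≤ i) (hj : 1 ≤ j) (hij : i ≠ j) :
    (∀ α : ℝ, patpExp i α = patpExp j α ↔ α = 1 / 2 ∨ α = -(1 / (i * j - 1))) ∧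
    (∀ α : ℝ, α ∈ Set.Icc (0 : ℝ) 1 → α ≠ 1 / 2 → patpExp i α ≠ patpExp j α) := by
  have hi0 : (0:ℝ) < i := lt_of_lt_of_le one_pos hi
  have hj0 : (0:ℝ) < j := lt_of_lt_of_le one_pos hj
  have hij1 : 1 < i * j := by
    by_contra h
    push_neg at h
    have h1 : i = 1 := by nlinarith
    have h2 : j = 1 := by nlinarith
    exact hij (h1.trans h2.symm)
  have hijne : i * j - 1 ≠ 0 := ne_of_gt (by linarith)
  have hijmul : i * j ≠ 0 := by positivity
  have key : ∀ α : ℝ, (patpExp i α - patpExp j α) * (i * j)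
      = (i - j) * (2 * α - 1) * ((i * j - 1) * α + 1) := by
    intro α
    unfold patpExp
    field_simp
    ring
  have main : ∀ α : ℝ, patpExp i α = patpExp j α ↔
      α = 1 / 2 ∨ α = -(1 / (i * j - 1)) := by
    intro α
    constructor
    · intro h
      have h2 := key α
      rw [h, sub_self, zero_mul] at h2
      rcases mul_eq_zero.mp h2.symm with h3 | h3
      · rcases mul_eq_zero.mp h3 with h4 | h4
        · exact absurd (sub_eq_zero.mp h4) hij
        · left; linarith
      · right
        field_simp
        linarith
    · intro h
      have h2 := key α
      have hr : (i - j) * (2 * α - 1) * ((i * j - 1) * α + 1) = 0 := by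
        rcases h with h | h
        · subst h; ring
        · subst h
          have : (i * j - 1) * -(1 / (i * j - 1)) + 1 = 0 := by
            field_simp
            norm_num
          rw [this, mul_zero]
      rw [hr] at h2
      have := (mul_eq_zero.mp h2).resolve_right hijmul
      linarith [sub_eq_zero.mp this]
  refine ⟨main, ?_⟩
  intro α hα hhalf heq
  rcases (main α).mp heq with h | h
  · exact hhalf h
  · have hpos : 0 < 1 / (i * j - 1) := by apply div_pos one_pos; linarith
    have : α < 0 := by rw [h]; linarith
    linarith [hα.1]
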